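/- Let G be a finite p-group of maximal class with G_1 abelian, of order p^n ≥ p^4. Then for every a ∈ G_1 \ Z(G), the centralizer C_G(a) equals G_1; consequently G_1 \ Z(G) forms a single z-class of G. -/

import Mathlib

open scoped commutatorElement

private lemma lcs_stab {G : Type*} [Group G] (i : ℕ)
    (h : (⊤ : Subgroup G).lowerCentralSeries i = (⊤ : Subgroup G).lowerCentralSeries (i+1)) :
    ∀ k, (⊤ : Subgroup G).lowerCentralSeries (i + k) = (⊤ : Subgroup G).lowerCentralSeries i := by
  intro k
  induction k with
  | zero => rfl
  | succ k ih =>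
    calc (⊤ : Subgroup G).lowerCentralSeries (i + (k+1)) = ⁅(⊤ : Subgroup G).lowerCentralSeries (i+k), ⊤⁆ := rfl
    _ = ⁅(⊤ : Subgroup G).lowerCentralSeries i, ⊤⁆ := by rw [ih]
    _ = (⊤ : Subgroup G).lowerCentralSeries (i+1) := rfl
    _ = (⊤ : Subgroup G).lowerCentralSeries i := h.symm

private lemma subgroup_eq_of_le_of_card_le {G : Type*} [Group G] {H K : Subgroup G}
    [Finite K] (h : H ≤ K) (hc : Nat.card K ≤ Nat.card H) : H = K := by
  apply SetLike.coe_injective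
  apply Set.eq_of_subset_of_ncard_le h ?_ (Set.toFinite _)
  rw [← Nat.card_coe_set_eq, ← Nat.card_coe_set_eq]
  exact hc

private lemma comm_mul_left {G : Type*} [Group G] (a b c : G) :
    ⁅a * b, c⁆ = a * ⁅b, c⁆ * a⁻¹ * ⁅a, c⁆ := by
  simp only [commutatorElement_def]
  group

/-- If `G` is a finite `p`-group of maximal class of order `p^n ≥ p^4` whose
two-step centralizer `G₁ = C_G(G₂/G₄)` is abelian, then for every
`a ∈ G₁ \ Z(G)` the centralizer of `a` is `G₁`; consequently all elements of
`G₁ \ Z(G)` are `z`-equivalent (their centralizers are conjugate). -/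
theorem stmt_7 {G : Type*} [Group G] [Finite G] (p n : ℕ) (hp : p.Prime) (hn : 4 ≤ n)
    (hcard : Nat.card G = p ^ n)
    (hmax₁ : (⊤ : Subgroup G).lowerCentralSeries (n - 1) = ⊥)
    (hmax₂ : (⊤ : Subgroup G).lowerCentralSeries (n - 2) ≠ ⊥)
    (G₁ : Subgroup G)
    (hG₁ : ∀ g : G, g ∈ G₁ ↔ ∀ x ∈ (⊤ : Subgroup G).lowerCentralSeries 1, ⁅g, x⁆ ∈ (⊤ : Subgroup G).lowerCentralSeries 3)
    (habel : ∀ a ∈ G₁, ∀ b ∈ G₁, a * b = b * a) :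
    (∀ a : G, a ∈ G₁ → a ∉ Subgroup.center G → Subgroup.centralizer {a} = G₁) ∧
    (∀ a b : G, a ∈ G₁ → a ∉ Subgroup.center G → b ∈ G₁ → b ∉ Subgroup.center G →
      ∃ g : G, (Subgroup.centralizer {a}).map (MulAut.conj g).toMonoidHom =
        Subgroup.centralizer {b}) := by
  have hp1 : 1 < p := hp.one_lt
  have hppos : 0 < p := hp.pos
  -- antitonicity
  have hle : ∀ {i j : ℕ}, i ≤ j → (⊤ : Subgroup G).lowerCentralSeries j ≤ (⊤ : Subgroup G).lowerCentralSeries i :=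
    fun h => Subgroup.lowerCentralSeries_antitone ⊤ h
  -- strictness of the lower central series up to n-2
  have hne : ∀ i, i ≤ n - 2 → (⊤ : Subgroup G).lowerCentralSeries i ≠ (⊤ : Subgroup G).lowerCentralSeries (i+1) := by
    intro i hi h
    have h2 := lcs_stab i h (n - 2 - i)
    have h1 := lcs_stab i h (n - 1 - i)
    rw [show i + (n - 2 - i) = n - 2 by omega] at h2
    rw [show i + (n - 1 - i) = n - 1 by omega] at h1
    exact hmax₂ (h2.trans (h1.symm.trans hmax₁))
  -- index bookkeeping
  set f : ℕ → ℕ := fun i => ((⊤ : Subgroup G).lowerCentralSeries i).index with hfdef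
  set r : ℕ → ℕ := fun i =>
    ((⊤ : Subgroup G).lowerCentralSeries (i+1)).relIndex ((⊤ : Subgroup G).lowerCentralSeries i) with hrdef
  have hrf : ∀ i, r i * f i = f (i+1) := fun i =>
    Subgroup.relIndex_mul_index (hle (Nat.le_succ i))
  have hfn : f (n-1) = p ^ n := by
    simp only [hfdef]; rw [hmax₁, Subgroup.index_bot, hcard]
  have hfd : ∀ i, f i ∣ p ^ n := by
    intro i
    rw [← hcard]
    exact Subgroup.index_dvd_card ((⊤ : Subgroup G).lowerCentralSeries i)
  have hrne1 : ∀ i, i ≤ n - 2 → r i ≠ 1 := by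
    intro i hi h1
    exact hne i hi
      (le_antisymm (Subgroup.relIndex_eq_one.mp h1) (hle (Nat.le_succ i)))
  have hrp : ∀ i, i ≤ n - 2 → p ∣ r i := by
    intro i hi
    have h1 : r i ∣ p ^ n := (Dvd.intro _ (hrf i)).trans (hfd (i+1))
    obtain ⟨m, _, hme⟩ := (Nat.dvd_prime_pow hp).mp h1
    rcases m with _ | m
    · exact absurd (by simp at hme; exact hme) (hrne1 i hi)
    · exact hme ▸ dvd_pow_self p (Nat.succ_ne_zero m)
  have hgrow : ∀ d j, j + d ≤ n - 1 → f j * p ^ d ∣ f (j + d) := by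
    intro d
    induction d with
    | zero => intro j _; rw [pow_zero, mul_one, Nat.add_zero]
    | succ d ih =>
      intro j hj
      have h1 : f j * p ^ d ∣ f (j + d) := ih j (by omega)
      have h2 : p ∣ r (j + d) := hrp (j + d) (by omega)
      calc f j * p ^ (d+1) = (f j * p ^ d) * p := by ring
      _ ∣ f (j+d) * r (j+d) := mul_dvd_mul h1 h2
      _ = f (j + d + 1) := by rw [mul_comm]; exact hrf (j+d)
  have hfle : ∀ j k, j ≤ k → k ≤ n - 1 → f j * p ^ (k - j) ∣ f k := by
    intro j k hjk hk
    have := hgrow (k - j) j (by omega)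
    rwa [show j + (k - j) = k by omega] at this
  have hfjd : ∀ j, j + 1 ≤ n → f j ∣ p ^ (j + 1) := by
    intro j hj
    have h1 := hfle j (n-1) (by omega) le_rfl
    rw [hfn, show n - 1 - j = n - (j+1) by omega] at h1
    have h2 : p ^ n = p ^ (j+1) * p ^ (n - (j+1)) := by
      rw [← pow_add]; congr 1; omega
    rw [h2] at h1
    exact (Nat.mul_dvd_mul_iff_right (pow_pos hppos _)).mp h1
  have hf1d : f 1 ∣ p ^ 2 := hfjd 1 (by omega)
  have hf2d : f 2 ∣ p ^ 3 := hfjd 2 (by omega)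
  have hf3d : f 3 ∣ p ^ 4 := hfjd 3 (by omega)
  -- G/γ₂ is not cyclic
  have hL1L2 : ¬ f 1 ∣ p := by
    intro hdvd
    have hcyc : IsCyclic (G ⧸ (⊤ : Subgroup G).lowerCentralSeries 1) := by
      have hcard1 : Nat.card (G ⧸ (⊤ : Subgroup G).lowerCentralSeries 1) = f 1 :=
        (Subgroup.index_eq_card _).symm
      rcases hp.eq_one_or_self_of_dvd _ hdvd with h | h
      · have : Nat.card (G ⧸ (⊤ : Subgroup G).lowerCentralSeries 1) = 1 := by rw [hcard1, h]
        exact @isCyclic_of_subsingleton _ _ (Nat.card_eq_one_iff_unique.mp this).1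
      · haveI : Fact p.Prime := ⟨hp⟩
        exact isCyclic_of_prime_card (hcard1.trans h)
    -- the induced map G⧸γ₃ → G⧸γ₂ has central kernel
    have hsub : (⊤ : Subgroup G).lowerCentralSeries 2 ≤ ((⊤ : Subgroup G).lowerCentralSeries 1).comap (MonoidHom.id G) :=
      fun x hx => by
        rw [Subgroup.mem_comap]
        exact hle (by norm_num) hx
    set φ2 : (G ⧸ (⊤ : Subgroup G).lowerCentralSeries 2) →* (G ⧸ (⊤ : Subgroup G).lowerCentralSeries 1) :=
      QuotientGroup.map _ _ (MonoidHom.id G) hsub with hφ2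
    have hkerc : φ2.ker ≤ Subgroup.center (G ⧸ (⊤ : Subgroup G).lowerCentralSeries 2) := by
      intro q hq
      induction q using QuotientGroup.induction_on with
      | H x =>
        have hx1 : x ∈ (⊤ : Subgroup G).lowerCentralSeries 1 := by
          have : φ2 ((x : G ⧸ (⊤ : Subgroup G).lowerCentralSeries 2)) = (x : G ⧸ (⊤ : Subgroup G).lowerCentralSeries 1) := rfl
          rw [MonoidHom.mem_ker, this, QuotientGroup.eq_one_iff] at hq
          exact hq
        rw [Subgroup.mem_center_iff]
        intro g
        induction g using QuotientGroup.induction_on with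
        | H y =>
          have hc : ⁅x, y⁆ ∈ (⊤ : Subgroup G).lowerCentralSeries 2 :=
            Subgroup.commutator_mem_commutator hx1 (Subgroup.mem_top y)
          have h9 : (QuotientGroup.mk' ((⊤ : Subgroup G).lowerCentralSeries 2)) ⁅x, y⁆ = 1 :=
            (QuotientGroup.eq_one_iff _).mpr hc
          rw [map_commutatorElement] at h9
          exact (commutatorElement_eq_one_iff_mul_comm.mp h9).symm
    have hcomm := commutative_of_cyclic_center_quotient φ2 hkerc
    have hle12 : (⊤ : Subgroup G).lowerCentralSeries 1 ≤ (⊤ : Subgroup G).lowerCentralSeries 2 := by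
      show (⁅(⊤ : Subgroup G), ⊤⁆ : Subgroup G) ≤ (⊤ : Subgroup G).lowerCentralSeries 2
      rw [Subgroup.commutator_le]
      intro g₁ _ g₂ _
      have h9 : (QuotientGroup.mk' ((⊤ : Subgroup G).lowerCentralSeries 2)) ⁅g₁, g₂⁆ = 1 := by
        rw [map_commutatorElement]
        exact commutatorElement_eq_one_iff_mul_comm.mpr (hcomm _ _)
      exact (QuotientGroup.eq_one_iff _).mp h9
    exact hne 1 (by omega) (le_antisymm hle12 (hle (by norm_num)))
  -- exact values
  have hf1 : f 1 = p ^ 2 := by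
    obtain ⟨m, hm2, hme⟩ := (Nat.dvd_prime_pow hp).mp hf1d
    interval_cases m
    · exact absurd (by rw [hme]; simp : f 1 ∣ p) hL1L2
    · exact absurd (by rw [hme, pow_one] : f 1 ∣ p) hL1L2
    · exact hme
  have hr1 : r 1 = p := by
    have h2 : r 1 * p ^ 2 = f 2 := by rw [← hf1]; exact hrf 1
    have h3 : r 1 * p ^ 2 ∣ p * p ^ 2 := by
      rw [h2, show p * p ^ 2 = p ^ 3 by ring]; exact hf2d
    have h4 : r 1 ∣ p := (Nat.mul_dvd_mul_iff_right (pow_pos hppos 2)).mp h3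
    rcases hp.eq_one_or_self_of_dvd _ h4 with h | h
    · exact absurd h (hrne1 1 (by omega))
    · exact h
  have hf2 : f 2 = p ^ 3 := by rw [← hrf 1, hr1, hf1]; ring
  have hr2 : r 2 = p := by
    have h2 : r 2 * p ^ 3 = f 3 := by rw [← hf2]; exact hrf 2
    have h3 : r 2 * p ^ 3 ∣ p * p ^ 3 := by
      rw [h2, show p * p ^ 3 = p ^ 4 by ring]; exact hf3d
    have h4 : r 2 ∣ p := (Nat.mul_dvd_mul_iff_right (pow_pos hppos 3)).mp h3
    rcases hp.eq_one_or_self_of_dvd _ h4 with h | h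
    · exact absurd h (hrne1 2 (by omega))
    · exact h
  have hf3 : f 3 = p ^ 4 := by rw [← hrf 2, hr2, hf2]; ring
  -- work in Q = G ⧸ γ₄
  set π : G →* G ⧸ (⊤ : Subgroup G).lowerCentralSeries 3 := QuotientGroup.mk' ((⊤ : Subgroup G).lowerCentralSeries 3) with hπ
  have hπsurj : Function.Surjective π := QuotientGroup.mk'_surjective _
  have hcardQ : Nat.card (G ⧸ (⊤ : Subgroup G).lowerCentralSeries 3) = p ^ 4 := by
    rw [← Subgroup.index_eq_card]; exact hf3
  obtain ⟨N1, hN1⟩ : ∃ N' : Subgroup (G ⧸ (⊤ : Subgroup G).lowerCentralSeries 3),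
      N' = ((⊤ : Subgroup G).lowerCentralSeries 1).map π := ⟨_, rfl⟩
  obtain ⟨N2, hN2⟩ : ∃ N' : Subgroup (G ⧸ (⊤ : Subgroup G).lowerCentralSeries 3),
      N' = ((⊤ : Subgroup G).lowerCentralSeries 2).map π := ⟨_, rfl⟩
  have hkerπ : π.ker = (⊤ : Subgroup G).lowerCentralSeries 3 := QuotientGroup.ker_mk' _
  have hN2ind : N2.index = p ^ 3 := by
    rw [hN2]
    rw [Subgroup.index_map, hkerπ, sup_of_le_left (hle (by norm_num)),
      π.range_eq_top_of_surjective hπsurj, Subgroup.index_top, mul_one]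
    exact hf2
  have hN1ind : N1.index = p ^ 2 := by
    rw [hN1]
    rw [Subgroup.index_map, hkerπ, sup_of_le_left (hle (by norm_num)),
      π.range_eq_top_of_surjective hπsurj, Subgroup.index_top, mul_one]
    exact hf1
  have hcardN2 : Nat.card N2 = p := by
    have h1 := Subgroup.card_mul_index N2
    rw [hcardQ, hN2ind] at h1
    have h2 : Nat.card N2 * p ^ 3 = p * p ^ 3 := by rw [h1]; ring
    exact Nat.eq_of_mul_eq_mul_right (pow_pos hppos 3) h2
  have hcardN1 : Nat.card N1 = p ^ 2 := by
    have h1 := Subgroup.card_mul_index N1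
    rw [hcardQ, hN1ind] at h1
    have h2 : Nat.card N1 * p ^ 2 = p ^ 2 * p ^ 2 := by rw [h1]; ring
    exact Nat.eq_of_mul_eq_mul_right (pow_pos hppos 2) h2
  -- N2 is central in Q
  have hN2c : N2 ≤ Subgroup.center (G ⧸ (⊤ : Subgroup G).lowerCentralSeries 3) := by
    intro q hq
    rw [hN2] at hq
    obtain ⟨x, hx, rfl⟩ := hq
    rw [Subgroup.mem_center_iff]
    intro g
    induction g using QuotientGroup.induction_on with
    | H y =>
      have hc : ⁅y, x⁆ ∈ (⊤ : Subgroup G).lowerCentralSeries 3 := by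
        have h1 : ⁅y, x⁆ ∈ ⁅(⊤ : Subgroup G), (⊤ : Subgroup G).lowerCentralSeries 2⁆ :=
          Subgroup.commutator_mem_commutator (Subgroup.mem_top y) hx
        rwa [Subgroup.commutator_comm] at h1
      have h9 : π ⁅y, x⁆ = 1 := (QuotientGroup.eq_one_iff _).mpr hc
      rw [map_commutatorElement] at h9
      exact commutatorElement_eq_one_iff_mul_comm.mp h9
  -- choose s ∈ γ₂ \ γ₃
  have hnotle : ¬ (⊤ : Subgroup G).lowerCentralSeries 1 ≤ (⊤ : Subgroup G).lowerCentralSeries 2 := fun h =>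
    hne 1 (by omega) (le_antisymm h (hle (by norm_num)))
  obtain ⟨s, hs1, hs2⟩ := SetLike.not_le_iff_exists.mp hnotle
  have hsN2 : π s ∉ N2 := by
    intro hmem
    rw [hN2] at hmem
    obtain ⟨w, hw, hws⟩ := hmem
    have h1 : π (w⁻¹ * s) = 1 := by rw [map_mul, map_inv, hws]; group
    have h2 : w⁻¹ * s ∈ (⊤ : Subgroup G).lowerCentralSeries 3 := by
      have h2' := MonoidHom.mem_ker (f := π).mpr h1
      rwa [hkerπ] at h2'
    have h3 : w * (w⁻¹ * s) ∈ (⊤ : Subgroup G).lowerCentralSeries 2 :=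
      mul_mem hw (hle (by norm_num : (2:ℕ) ≤ 3) h2)
    rw [mul_inv_cancel_left] at h3
    exact hs2 h3
  -- the subgroup generated by π s and N2 is all of N1
  have hsmem : π s ∈ N1 := by rw [hN1]; exact ⟨s, hs1, rfl⟩
  have hN2N1 : N2 ≤ N1 := by
    rw [hN1, hN2]
    exact Subgroup.map_mono (hle (by norm_num))
  have hPeq : Subgroup.zpowers (π s) ⊔ N2 = N1 := by
    obtain ⟨P, hP⟩ : ∃ P : Subgroup (G ⧸ (⊤ : Subgroup G).lowerCentralSeries 3),
        P = Subgroup.zpowers (π s) ⊔ N2 := ⟨_, rfl⟩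
    rw [← hP]
    have hPN1 : P ≤ N1 := by
      rw [hP]
      exact sup_le (Subgroup.zpowers_le.mpr hsmem) hN2N1
    have hN2P : N2 ≤ P := by rw [hP]; exact le_sup_right
    have hsP : π s ∈ P := by
      rw [hP]
      exact SetLike.le_def.mp le_sup_left (Subgroup.mem_zpowers (π s))
    have hdvd1 : Nat.card P ∣ p ^ 2 := hcardN1 ▸ Subgroup.card_dvd_of_le hPN1
    have hdvd2 : p ∣ Nat.card P := hcardN2 ▸ Subgroup.card_dvd_of_le hN2P
    have hPnep : Nat.card P ≠ p := by
      intro h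
      have heq : N2 = P := subgroup_eq_of_le_of_card_le hN2P (by rw [h, hcardN2])
      exact hsN2 (heq ▸ hsP)
    have hcardP : Nat.card P = p ^ 2 := by
      obtain ⟨m, hm2, hme⟩ := (Nat.dvd_prime_pow hp).mp hdvd1
      interval_cases m
      · rw [hme] at hdvd2; simp at hdvd2; omega
      · exact absurd (by simpa using hme) hPnep
      · exact hme
    exact subgroup_eq_of_le_of_card_le hPN1 (by rw [hcardP, hcardN1])
  -- key: commuting with s modulo γ₄ puts you in G₁
  have hkey : ∀ g : G, ⁅g, s⁆ ∈ (⊤ : Subgroup G).lowerCentralSeries 3 → g ∈ G₁ := by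
    intro g hg
    have hC : N1 ≤ Subgroup.centralizer {π g} := by
      rw [← hPeq]
      apply sup_le
      · rw [Subgroup.zpowers_le, Subgroup.mem_centralizer_iff]
        intro h hh
        rw [Set.mem_singleton_iff] at hh
        subst hh
        have h1 : π ⁅g, s⁆ = 1 := (QuotientGroup.eq_one_iff _).mpr hg
        rw [map_commutatorElement] at h1
        exact commutatorElement_eq_one_iff_mul_comm.mp h1
      · exact hN2c.trans (Subgroup.center_le_centralizer _)
    rw [hG₁]
    intro x hx
    have hx1 : π x ∈ N1 := by rw [hN1]; exact ⟨x, hx, rfl⟩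
    have h2 : π x ∈ Subgroup.centralizer {π g} := hC hx1
    have h3 : π g * π x = π x * π g :=
      Subgroup.mem_centralizer_iff.mp h2 (π g) rfl
    have h4 : π ⁅g, x⁆ = 1 := by
      rw [map_commutatorElement]
      exact commutatorElement_eq_one_iff_mul_comm.mpr h3
    exact (QuotientGroup.eq_one_iff _).mp h4
  -- commutators with s land in γ₃
  have hLs : ∀ y : G, ⁅y, s⁆ ∈ (⊤ : Subgroup G).lowerCentralSeries 2 := by
    intro y
    have h1 : ⁅y, s⁆ ∈ ⁅(⊤ : Subgroup G), (⊤ : Subgroup G).lowerCentralSeries 1⁆ :=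
      Subgroup.commutator_mem_commutator (Subgroup.mem_top y) hs1
    rwa [Subgroup.commutator_comm] at h1
  -- the transvection homomorphism
  obtain ⟨φ, hφ⟩ : ∃ φ : G →* G ⧸ (⊤ : Subgroup G).lowerCentralSeries 3, ∀ g, φ g = π ⁅g, s⁆ := by
    refine ⟨⟨⟨fun g => π ⁅g, s⁆, ?_⟩, ?_⟩, fun g => rfl⟩
    · simp [commutatorElement_one_left]
      exact map_one π
    · intro a b
      have hcen : ∀ y : G, π ⁅y, s⁆ ∈ Subgroup.center (G ⧸ (⊤ : Subgroup G).lowerCentralSeries 3) :=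
        fun y => hN2c (by rw [hN2]; exact ⟨⁅y, s⁆, hLs y, rfl⟩)
      show π ⁅a * b, s⁆ = π ⁅a, s⁆ * π ⁅b, s⁆
      rw [comm_mul_left]
      rw [map_mul, map_mul, map_mul, map_inv]
      have h1 := Subgroup.mem_center_iff.mp (hcen b) (π a)
      have h2 := Subgroup.mem_center_iff.mp (hcen b) (π ⁅a, s⁆)
      rw [h1, mul_inv_cancel_right]
      exact h2.symm
  have hker : φ.ker = G₁ := by
    ext g
    rw [MonoidHom.mem_ker, hφ g]
    constructor
    · intro h
      refine hkey g ?_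
      have h2' := MonoidHom.mem_ker (f := π).mpr h
      rwa [hkerπ] at h2'
    · intro h
      have h1 : ⁅g, s⁆ ∈ (⊤ : Subgroup G).lowerCentralSeries 3 := (hG₁ g).mp h s hs1
      have h2' : ⁅g, s⁆ ∈ π.ker := by rw [hkerπ]; exact h1
      exact MonoidHom.mem_ker (f := π).mp h2'
  -- the index of G₁ is p
  have hG₁top : G₁ ≠ ⊤ := by
    intro htop
    have h1 : (⊤ : Subgroup G).lowerCentralSeries 2 ≤ (⊤ : Subgroup G).lowerCentralSeries 3 := by
      show (⁅(⊤ : Subgroup G).lowerCentralSeries 1, (⊤ : Subgroup G)⁆ : Subgroup G) ≤ (⊤ : Subgroup G).lowerCentralSeries 3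
      rw [Subgroup.commutator_comm, Subgroup.commutator_le]
      intro g₁ _ g₂ hg₂
      exact (hG₁ g₁).mp (htop ▸ Subgroup.mem_top g₁) g₂ hg₂
    exact hne 2 (by omega) (le_antisymm h1 (hle (by norm_num)))
  have hind : G₁.index = p := by
    have h1 : φ.ker.index = Nat.card φ.range := Subgroup.index_ker φ
    have h2 : φ.range ≤ N2 := by
      rintro q ⟨y, rfl⟩
      rw [hφ y, hN2]
      exact ⟨⁅y, s⁆, hLs y, rfl⟩
    have h3 : Nat.card φ.range ∣ p := hcardN2 ▸ Subgroup.card_dvd_of_le h2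
    rw [hker] at h1
    have h4 : G₁.index ∣ p := by rw [h1]; exact h3
    rcases hp.eq_one_or_self_of_dvd _ h4 with h | h
    · exact absurd (Subgroup.index_eq_one.mp h) hG₁top
    · exact h
  -- conclusion, part 1
  have main : ∀ a : G, a ∈ G₁ → a ∉ Subgroup.center G → Subgroup.centralizer {a} = G₁ := by
    intro a ha hz
    have hle1 : G₁ ≤ Subgroup.centralizer {a} := by
      intro x hx
      rw [Subgroup.mem_centralizer_iff]
      intro h hh
      rw [Set.mem_singleton_iff] at hh
      rw [hh]
      exact habel a ha x hx
    have hne_top : Subgroup.centralizer {a} ≠ ⊤ := by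
      intro h
      exact hz (Subgroup.centralizer_eq_top_iff_subset.mp h rfl)
    have h1 : (Subgroup.centralizer {a}).index ∣ p := hind ▸ Subgroup.index_dvd_of_le hle1
    have h2 : (Subgroup.centralizer {a}).index ≠ 1 := fun h =>
      hne_top (Subgroup.index_eq_one.mp h)
    have h3 : (Subgroup.centralizer {a}).index = p := by
      rcases hp.eq_one_or_self_of_dvd _ h1 with h | h
      · exact absurd h h2
      · exact h
    have h4 := Subgroup.relIndex_mul_index hle1
    rw [h3, hind] at h4
    have h5 : G₁.relIndex (Subgroup.centralizer {a}) = 1 := by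
      have : G₁.relIndex (Subgroup.centralizer {a}) * p = 1 * p := by rw [h4, one_mul]
      exact Nat.eq_of_mul_eq_mul_right hppos this
    exact le_antisymm (Subgroup.relIndex_eq_one.mp h5) hle1
  constructor
  · exact main
  · intro a b ha hza hb hzb
    refine ⟨1, ?_⟩
    rw [main a ha hza, main b hb hzb]
    ext x
    simp [Subgroup.mem_map, MulAut.conj_apply]
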